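/- arXiv:2003.03142 — 4 statements merged into one kernel-verified Lean document; each statement's English description precedes it below -/
import Mathlib

section
/- Let G be a subgroup of the Boolean group 2^κ (functions from κ to ℤ/2 with pointwise addition, product topology). If for every coordinate-wise linearly independent indexed family {(x_n, y_n) : n ∈ ω} ⊆ G × G that is dense-related as follows—for every (u,v) ∈ G × G there exists a coordinate ε with u(ε) = v(ε) = 0 and max(x_n(ε), y_n(ε)) = 1 for all but finitely many n—then the set {(x_n, y_n) : n ∈ ω} is closed and discrete in G × G. -/
instance : TopologicalSpace (ZMod 2) := ⊥

instance : DiscreteTopology (ZMod 2) := ⟨rfl⟩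

set_option synthInstance.maxHeartbeats 400000 in
theorem stmt3 {κ : Type*} (G : AddSubgroup (κ → ZMod 2)) (x y : ℕ → ↥G)
    (hli : LinearIndependent (ZMod 2)
      (Sum.elim (fun n => ((x n : κ → ZMod 2))) (fun n => ((y n : κ → ZMod 2)))))
    (hdense : ∀ u v : ↥G, ∃ ε : κ,
      (u : κ → ZMod 2) ε = 0 ∧ (v : κ → ZMod 2) ε = 0 ∧
      ∀ᶠ n in Filter.atTop, (x n : κ → ZMod 2) ε = 1 ∨ (y n : κ → ZMod 2) ε = 1) :
    ∀ p : ↥G × ↥G, p ∉ closure ({q : ↥G × ↥G | ∃ n, q = (x n, y n)} \ {p}) := by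
  rintro ⟨u, v⟩ hp
  obtain ⟨ε, hu, hv, hev⟩ := hdense u v
  rw [Filter.eventually_atTop] at hev
  obtain ⟨N, hN⟩ := hev
  have hc1 : Continuous fun q : ↥G × ↥G => (q.1 : κ → ZMod 2) ε :=
    (continuous_apply ε).comp (continuous_subtype_val.comp continuous_fst)
  have hc2 : Continuous fun q : ↥G × ↥G => (q.2 : κ → ZMod 2) ε :=
    (continuous_apply ε).comp (continuous_subtype_val.comp continuous_snd)
  have hU1 : IsOpen {q : ↥G × ↥G |
      (q.1 : κ → ZMod 2) ε = 0 ∧ (q.2 : κ → ZMod 2) ε = 0} := by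
    have h1 : IsOpen {q : ↥G × ↥G | (q.1 : κ → ZMod 2) ε = 0} :=
      hc1.isOpen_preimage {0} (isOpen_discrete _)
    have h2 : IsOpen {q : ↥G × ↥G | (q.2 : κ → ZMod 2) ε = 0} :=
      hc2.isOpen_preimage {0} (isOpen_discrete _)
    exact h1.inter h2
  set F : Set (↥G × ↥G) := ((fun n => ((x n, y n) : ↥G × ↥G)) '' Set.Iio N) \ {(u, v)}
    with hF
  have hFfin : F.Finite := ((Set.finite_Iio N).image _).subset Set.diff_subset
  have hFcl : IsClosed F := hFfin.isClosed
  have hpF : (u, v) ∉ F := fun h => h.2 rfl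
  have hmem : {q : ↥G × ↥G |
      (q.1 : κ → ZMod 2) ε = 0 ∧ (q.2 : κ → ZMod 2) ε = 0} \ F ∈ nhds ((u, v) : ↥G × ↥G) :=
    (hU1.sdiff hFcl).mem_nhds ⟨⟨hu, hv⟩, hpF⟩
  obtain ⟨q, ⟨⟨hq1, hq2⟩, hqF⟩, ⟨n, hqn⟩, hqp⟩ :=
    mem_closure_iff_nhds.mp hp _ hmem
  have hnN : n < N := by
    by_contra h
    rcases hN n (le_of_not_gt h) with h' | h'
    · rw [hqn] at hq1; simp only at hq1; rw [h'] at hq1; exact one_ne_zero hq1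
    · rw [hqn] at hq2; simp only at hq2; rw [h'] at hq2; exact one_ne_zero hq2
  exact hqF ⟨⟨n, hnN, hqn.symm⟩, hqp⟩
end

section
/- Let V be an infinite-dimensional vector space over F₂ and D ⊆ V a dense subset of V × V where V ⊆ (ℤ/2)^κ carries the subspace topology of the product topology and D is dense in V × V. If V has no isolated points (equivalently the topology is non-discrete on every coset of every open subgroup), then there exists a countable subset {(x_n, y_n) : n ∈ ω} ⊆ D such that the indexed family {x_n, y_n : n ∈ ω} is linearly independent over F₂. -/
instance : ContinuousAdd (ZMod 2) := ⟨continuous_of_discreteTopology⟩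

theorem stmt12 {κ : Type*} (V : Submodule (ZMod 2) (κ → ZMod 2))
    (hinf : ¬ Module.Finite (ZMod 2) ↥V)
    (D : Set (↥V × ↥V)) (hD : Dense D)
    (hni : ∀ v : ↥V, (nhdsWithin v {v}ᶜ).NeBot) :
    ∃ x y : ℕ → ↥V, (∀ n, (x n, y n) ∈ D) ∧
      LinearIndependent (ZMod 2) (Sum.elim x y) := by
  classical
  have h2 : ∀ v : ↥V, v + v = 0 := by
    intro v
    have := two_smul (ZMod 2) v
    rw [show (2 : ZMod 2) = 0 by decide, zero_smul] at this
    exact this.symm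
  -- complements of finite sets are dense
  have hden : ∀ s : Set ↥V, s.Finite → Dense sᶜ := by
    intro s hs
    haveI : ∀ v : ↥V, (nhdsWithin v {v}ᶜ).NeBot := hni
    rw [Set.compl_eq_univ_diff]
    exact dense_univ.diff_finite hs
  -- key existence step
  have key : ∀ t : Finset ↥V, ∃ p : ↥V × ↥V, p ∈ D ∧
      p.1 ∉ Submodule.span (ZMod 2) (t : Set ↥V) ∧
      p.2 ∉ Submodule.span (ZMod 2) (t : Set ↥V) ∧
      p.1 + p.2 ∉ Submodule.span (ZMod 2) (t : Set ↥V) := by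
    intro t
    set W := Submodule.span (ZMod 2) (t : Set ↥V) with hW
    haveI : Module.Finite (ZMod 2) ↥W := Module.Finite.span_of_finite _ t.finite_toSet
    haveI : Finite ↥W := Module.finite_of_finite (ZMod 2)
    have hWfin : (W : Set ↥V).Finite := Set.toFinite _
    have hWc : Dense ((W : Set ↥V))ᶜ := hden _ hWfin
    have hWcl : IsClosed (W : Set ↥V) := hWfin.isClosed
    -- the three open dense conditions
    have hA : Dense (Prod.fst ⁻¹' ((W : Set ↥V))ᶜ : Set (↥V × ↥V)) := by
      rw [← Set.prod_univ]
      exact hWc.prod dense_univ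
    have hAo : IsOpen (Prod.fst ⁻¹' ((W : Set ↥V))ᶜ : Set (↥V × ↥V)) :=
      hWcl.isOpen_compl.preimage continuous_fst
    have hB : Dense (Prod.snd ⁻¹' ((W : Set ↥V))ᶜ : Set (↥V × ↥V)) := by
      rw [← Set.univ_prod]
      exact dense_univ.prod hWc
    have hBo : IsOpen (Prod.snd ⁻¹' ((W : Set ↥V))ᶜ : Set (↥V × ↥V)) :=
      hWcl.isOpen_compl.preimage continuous_snd
    have hcadd : Continuous (fun p : ↥V × ↥V => p.1 + p.2) :=
      continuous_fst.add continuous_snd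
    have hCo : IsOpen ((fun p : ↥V × ↥V => p.1 + p.2) ⁻¹' ((W : Set ↥V))ᶜ) :=
      hWcl.isOpen_compl.preimage hcadd
    have hC : Dense ((fun p : ↥V × ↥V => p.1 + p.2) ⁻¹' ((W : Set ↥V))ᶜ) := by
      let e : (↥V × ↥V) ≃ₜ (↥V × ↥V) :=
        { toFun := fun p => (p.1, p.1 + p.2)
          invFun := fun p => (p.1, p.1 + p.2)
          left_inv := by
            intro p
            have hp : p.1 + (p.1 + p.2) = p.2 := by rw [← add_assoc, h2, zero_add]
            simp [hp]
          right_inv := by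
            intro p
            have hp : p.1 + (p.1 + p.2) = p.2 := by rw [← add_assoc, h2, zero_add]
            simp [hp]
          continuous_toFun := continuous_fst.prodMk (continuous_fst.add continuous_snd)
          continuous_invFun := continuous_fst.prodMk (continuous_fst.add continuous_snd) }
      have : (fun p : ↥V × ↥V => p.1 + p.2) ⁻¹' ((W : Set ↥V))ᶜ
          = e ⁻¹' (Prod.snd ⁻¹' ((W : Set ↥V))ᶜ) := rfl
      rw [this, dense_iff_closure_eq, ← e.preimage_closure, hB.closure_eq, Set.preimage_univ]
    have hG : Dense (D ∩ (Prod.fst ⁻¹' ((W : Set ↥V))ᶜ ∩ (Prod.snd ⁻¹' ((W : Set ↥V))ᶜ ∩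
        (fun p : ↥V × ↥V => p.1 + p.2) ⁻¹' ((W : Set ↥V))ᶜ))) :=
      hD.inter_of_isOpen_right
        (hA.inter_of_isOpen_left (hB.inter_of_isOpen_left hC hBo) hAo)
        (hAo.inter (hBo.inter hCo))
    obtain ⟨p, hp⟩ := hG.nonempty
    exact ⟨p, hp.1, hp.2.1, hp.2.2.1, hp.2.2.2⟩
  choose step hstepD hstep1 hstep2 hstep3 using key
  -- build the sequence of finsets
  let P : ℕ → Finset ↥V := fun n =>
    Nat.rec ∅ (fun _ t => insert (step t).1 (insert (step t).2 t)) n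
  have hPsucc : ∀ n, P (n + 1) = insert (step (P n)).1 (insert (step (P n)).2 (P n)) :=
    fun _ => rfl
  set x : ℕ → ↥V := fun n => (step (P n)).1 with hx
  set y : ℕ → ↥V := fun n => (step (P n)).2 with hy
  -- the interleaved family
  set f : ℕ → ↥V := fun k => if k % 2 = 0 then x (k / 2) else y (k / 2) with hf
  have hfx : ∀ n, f (2 * n) = x n := by
    intro n
    have e1 : (2 * n) % 2 = 0 := by omega
    have e2 : (2 * n) / 2 = n := by omega
    simp [hf, e1, e2]
  have hfy : ∀ n, f (2 * n + 1) = y n := by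
    intro n
    have e1 : (2 * n + 1) % 2 = 1 := by omega
    have e2 : (2 * n + 1) / 2 = n := by omega
    simp [hf, e1, e2]
  -- P n is the image of f on Iio (2n)
  have hPim : ∀ n, SetLike.coe (P n) = f '' Set.Iio (2 * n) := by
    intro n
    induction n with
    | zero =>
      have : Set.Iio (2 * 0) = (∅ : Set ℕ) := by ext k; simp
      rw [this]
      simp [P]
    | succ n ih =>
      rw [hPsucc n]
      have h1 : Set.Iio (2 * (n + 1)) = insert (2 * n) (insert (2 * n + 1) (Set.Iio (2 * n))) := by
        ext k
        simp only [Set.mem_Iio, Set.mem_insert_iff, Set.mem_Iio]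
        omega
      rw [h1]
      simp only [Set.image_insert_eq, hfx, hfy, Finset.coe_insert, ih]
      rfl
  -- each new vector avoids the span of previous ones
  have hnotmem : ∀ k, f k ∉ Submodule.span (ZMod 2) (f '' Set.Iio k) := by
    intro k
    rcases Nat.even_or_odd k with ⟨n, hn⟩ | ⟨n, hn⟩
    · subst hn
      rw [show n + n = 2 * n by ring, hfx, ← hPim]
      exact hstep1 (P n)
    · subst hn
      rw [hfy]
      have h1 : Set.Iio (2 * n + 1) = insert (2 * n) (Set.Iio (2 * n)) := by
        ext k; simp only [Set.mem_Iio, Set.mem_insert_iff, Set.mem_Iio]; omega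
      rw [h1, Set.image_insert_eq, hfx, ← hPim]
      intro hmem
      rw [Submodule.mem_span_insert] at hmem
      obtain ⟨a, z, hz, hyz⟩ := hmem
      have ha : a = 0 ∨ a = 1 := by
        have hmem := Finset.mem_univ a
        rw [show (Finset.univ : Finset (ZMod 2)) = {0, 1} by decide] at hmem
        simpa using hmem
      rcases ha with rfl | rfl
      · rw [zero_smul, zero_add] at hyz
        rw [← hyz] at hz
        exact hstep2 (P n) hz
      · rw [one_smul] at hyz
        apply hstep3 (P n)
        have : x n + y n = z := by rw [hyz, ← add_assoc, h2, zero_add]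
        rw [this]; exact hz
  -- injectivity of f
  have hinj : Function.Injective f := by
    intro a b hab
    by_contra hne
    rcases Nat.lt_or_ge a b with h | h
    · exact hnotmem b (Submodule.subset_span ⟨a, h, hab⟩)
    · have h' : b < a := lt_of_le_of_ne h (Ne.symm hne)
      exact hnotmem a (Submodule.subset_span ⟨b, h', hab.symm⟩)
  -- linear independence of each initial segment
  have hLI : ∀ n, LinearIndependent (ZMod 2)
      (fun v : ↥(f '' Set.Iio n) => (v : ↥V)) := by
    intro n
    induction n with
    | zero =>
      have h0 : f '' Set.Iio 0 = (∅ : Set ↥V) := by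
        have : Set.Iio 0 = (∅ : Set ℕ) := by ext k; simp
        rw [this, Set.image_empty]
      rw [h0]
      exact linearIndependent_empty_type
    | succ n ih =>
      have h1 : Set.Iio (n + 1) = insert n (Set.Iio n) := by
        ext k; simp only [Set.mem_Iio, Set.mem_insert_iff, Set.mem_Iio]; omega
      rw [h1, Set.image_insert_eq]
      exact LinearIndepOn.id_insert ih (hnotmem n)
  -- linear independence of the whole range
  have hrange : LinearIndependent (ZMod 2) f := by
    have hdir : Directed (· ⊆ ·) (fun n => f '' Set.Iio n) := by
      intro a b
      refine ⟨max a b, Set.image_mono ?_, Set.image_mono ?_⟩ <;>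
        intro k hk <;> simp only [Set.mem_Iio] at * <;> omega
    have hun : (⋃ n, f '' Set.Iio n) = Set.range f := by
      ext v
      constructor
      · rintro ⟨_, ⟨n, rfl⟩, k, _, rfl⟩; exact ⟨k, rfl⟩
      · rintro ⟨k, rfl⟩; exact ⟨f '' Set.Iio (k + 1), ⟨k + 1, rfl⟩, k, by simp, rfl⟩
    have := linearIndepOn_iUnion_of_directed (v := id) hdir hLI
    rw [hun] at this
    exact (linearIndepOn_id_range_iff hinj).mp this
  refine ⟨x, y, ?_, ?_⟩
  · intro n
    have := hstepD (P n)
    rwa [show (x n, y n) = step (P n) from rfl]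
  · have heq : Sum.elim x y = f ∘ (Sum.elim (fun n => 2 * n) (fun n => 2 * n + 1)) := by
      funext s
      cases s with
      | inl n => simp [hfx n]
      | inr n => simp [hfy n]
    rw [heq]
    apply hrange.comp
    intro a b hab
    cases a <;> cases b <;> simp only [Sum.elim_inl, Sum.elim_inr] at hab
    · exact congrArg Sum.inl (by omega)
    · exact absurd hab (by omega)
    · exact absurd hab (by omega)
    · exact congrArg Sum.inr (by omega)
end

section
/- Let E be a Boolean group, and define the poset P of all partial homomorphisms p from finite subgroups of E to ℤ/2 satisfying: x', y' ∈ dom(p) with p(x')=p(y')=0; for each n, x_n ∈ dom(p) iff y_n ∈ dom(p); if x_n ∈ dom(p) then max(p(x_n),p(y_n))=1; and [{x_n, y_n : x_n ∉ dom(p)}] ∩ dom(p) = {0}, ordered by reverse extension. Then any two elements p, p' of P whose domains generate a subgroup D with D ∩ [{x_n, y_n : x_n ∉ dom(p) ∪ dom(p')}] = {0} and which agree on dom(p) ∩ dom(p') have a common extension in P. -/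
/-- A condition of the forcing poset: a homomorphism from a finite subgroup of the Boolean
group `E` to `ℤ/2` satisfying the side conditions. -/
structure Cond (E : Type*) [AddCommGroup E] [Module (ZMod 2) E]
    (x' y' : E) (x y : ℕ → E) where
  dom : AddSubgroup E
  finite : (dom : Set E).Finite
  toFun : ↥dom →+ ZMod 2
  mem_x' : x' ∈ dom
  mem_y' : y' ∈ dom
  map_x' : toFun ⟨x', mem_x'⟩ = 0
  map_y' : toFun ⟨y', mem_y'⟩ = 0
  mem_iff : ∀ n, x n ∈ dom ↔ y n ∈ dom
  max_one : ∀ n (h : x n ∈ dom), toFun ⟨x n, h⟩ = 1 ∨ toFun ⟨y n, (mem_iff n).1 h⟩ = 1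
  span_inter : ∀ v ∈ Submodule.span (ZMod 2)
      {w | ∃ n, x n ∉ dom ∧ (w = x n ∨ w = y n)}, v ∈ dom → v = 0

theorem stmt14 {E : Type*} [AddCommGroup E] [Module (ZMod 2) E]
    (x' y' : E) (x y : ℕ → E)
    (hli : LinearIndependent (ZMod 2) (Sum.elim x y))
    (hinter : Submodule.span (ZMod 2) {x', y'} ⊓
      Submodule.span (ZMod 2) (Set.range x ∪ Set.range y) = ⊥)
    (p p' : Cond E x' y' x y)
    (hagree : ∀ v (h1 : v ∈ p.dom) (h2 : v ∈ p'.dom), p.toFun ⟨v, h1⟩ = p'.toFun ⟨v, h2⟩)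
    (hsup : ∀ v ∈ Submodule.span (ZMod 2)
      {w | ∃ n, (x n ∉ p.dom ∧ x n ∉ p'.dom) ∧ (w = x n ∨ w = y n)},
      v ∈ p.dom ⊔ p'.dom → v = 0) :
    ∃ r : Cond E x' y' x y, ∃ (h1 : p.dom ≤ r.dom) (h2 : p'.dom ≤ r.dom),
      r.dom = p.dom ⊔ p'.dom ∧
      (∀ v (hv : v ∈ p.dom), r.toFun ⟨v, h1 hv⟩ = p.toFun ⟨v, hv⟩) ∧
      (∀ v (hv : v ∈ p'.dom), r.toFun ⟨v, h2 hv⟩ = p'.toFun ⟨v, hv⟩) := by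
  classical
  set D := p.dom ⊔ p'.dom with hD
  -- well-definedness of the glued map
  have welldef : ∀ (a b a' b' : E) (ha : a ∈ p.dom) (hb : b ∈ p'.dom)
      (ha' : a' ∈ p.dom) (hb' : b' ∈ p'.dom), a + b = a' + b' →
      p.toFun ⟨a, ha⟩ + p'.toFun ⟨b, hb⟩ = p.toFun ⟨a', ha'⟩ + p'.toFun ⟨b', hb'⟩ := by
    intro a b a' b' ha hb ha' hb' hab
    have hsub : a - a' = b' - b := by
      have h1 : a + b = b' + a' := by rw [hab, add_comm]
      exact (sub_eq_sub_iff_add_eq_add).mpr h1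
    have hmem' : a - a' ∈ p'.dom := by rw [hsub]; exact p'.dom.sub_mem hb' hb
    have h1 : p.toFun (⟨a, ha⟩ - ⟨a', ha'⟩) = p'.toFun (⟨b', hb'⟩ - ⟨b, hb⟩) := by
      have h0 := hagree (a - a') (p.dom.sub_mem ha ha') hmem'
      have e1 : (⟨a, ha⟩ - ⟨a', ha'⟩ : p.dom) = ⟨a - a', p.dom.sub_mem ha ha'⟩ :=
        Subtype.ext rfl
      have e2 : (⟨b', hb'⟩ - ⟨b, hb⟩ : p'.dom) = ⟨a - a', hmem'⟩ :=
        Subtype.ext (by simp [hsub.symm])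
      rw [e1, e2]; exact h0
    rw [map_sub, map_sub] at h1
    linear_combination h1
  have hmemD : ∀ v, v ∈ D → ∃ a b, ∃ (_ : a ∈ p.dom) (_ : b ∈ p'.dom), a + b = v := by
    intro v hv
    rcases AddSubgroup.mem_sup.mp hv with ⟨a, ha, b, hb, hab⟩
    exact ⟨a, b, ha, hb, hab⟩
  choose A B hA hB hAB using fun v : ↥D => hmemD v v.2
  set g : ↥D → ZMod 2 := fun v => p.toFun ⟨A v, hA v⟩ + p'.toFun ⟨B v, hB v⟩ with hg
  have hadd : ∀ u v : ↥D, g (u + v) = g u + g v := by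
    intro u v
    have hsum : (A u + A v) + (B u + B v) = A (u + v) + B (u + v) := by
      have h1 := hAB u; have h2 := hAB v; have h3 := hAB (u + v)
      rw [h3]
      push_cast
      rw [← h1, ← h2]; abel
    have hw := welldef _ _ _ _ (p.dom.add_mem (hA u) (hA v)) (p'.dom.add_mem (hB u) (hB v))
      (hA (u + v)) (hB (u + v)) hsum
    simp only [hg]
    rw [← hw]
    rw [show (⟨A u + A v, p.dom.add_mem (hA u) (hA v)⟩ : p.dom)
        = ⟨A u, hA u⟩ + ⟨A v, hA v⟩ from rfl,
      show (⟨B u + B v, p'.dom.add_mem (hB u) (hB v)⟩ : p'.dom)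
        = ⟨B u, hB u⟩ + ⟨B v, hB v⟩ from rfl, map_add, map_add]
    abel
  -- g extends p and p'
  have hgp : ∀ v (hv : v ∈ p.dom) (h : v ∈ D), g ⟨v, h⟩ = p.toFun ⟨v, hv⟩ := by
    intro v hv h
    have hsum : A ⟨v, h⟩ + B ⟨v, h⟩ = v + 0 := by rw [add_zero]; exact hAB ⟨v, h⟩
    have hw := welldef _ _ _ _ (hA ⟨v, h⟩) (hB ⟨v, h⟩) hv p'.dom.zero_mem hsum
    simp only [hg]
    rw [hw, show (⟨(0 : E), p'.dom.zero_mem⟩ : p'.dom) = 0 from rfl, map_zero, add_zero]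
  have hgp' : ∀ v (hv : v ∈ p'.dom) (h : v ∈ D), g ⟨v, h⟩ = p'.toFun ⟨v, hv⟩ := by
    intro v hv h
    have hsum : A ⟨v, h⟩ + B ⟨v, h⟩ = 0 + v := by rw [zero_add]; exact hAB ⟨v, h⟩
    have hw := welldef _ _ _ _ (hA ⟨v, h⟩) (hB ⟨v, h⟩) p.dom.zero_mem hv hsum
    simp only [hg]
    rw [hw, show (⟨(0 : E), p.dom.zero_mem⟩ : p.dom) = 0 from rfl, map_zero, zero_add]
  -- membership facts
  have hmemx : ∀ n, x n ∈ D → x n ∈ p.dom ∨ x n ∈ p'.dom := by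
    intro n h
    by_contra hc; push_neg at hc
    have h0 : x n = 0 := hsup _ (Submodule.subset_span ⟨n, hc, Or.inl rfl⟩) h
    exact hli.ne_zero (Sum.inl n) h0
  have hmemy : ∀ n, y n ∈ D → y n ∈ p.dom ∨ y n ∈ p'.dom := by
    intro n h
    by_contra hc; push_neg at hc
    have hx1 : x n ∉ p.dom := fun hh => hc.1 ((p.mem_iff n).1 hh)
    have hx2 : x n ∉ p'.dom := fun hh => hc.2 ((p'.mem_iff n).1 hh)
    have h0 : y n = 0 := hsup _ (Submodule.subset_span ⟨n, ⟨hx1, hx2⟩, Or.inr rfl⟩) h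
    exact hli.ne_zero (Sum.inr n) h0
  -- finiteness of D
  have hfin : (D : Set E).Finite := by
    have hsub : (D : Set E) ⊆ (fun q : E × E => q.1 + q.2) ''
        ((p.dom : Set E) ×ˢ (p'.dom : Set E)) := by
      intro v hv
      rcases hmemD v hv with ⟨a, b, ha, hb, hab⟩
      exact ⟨(a, b), ⟨ha, hb⟩, hab⟩
    exact ((p.finite.prod p'.finite).image _).subset hsub
  have hle1 : p.dom ≤ D := le_sup_left
  have hle2 : p'.dom ≤ D := le_sup_right
  have hxD : x' ∈ D := hle1 p.mem_x'
  have hyD : y' ∈ D := hle1 p.mem_y'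
  refine ⟨⟨D, hfin, AddMonoidHom.mk' g hadd, hxD, hyD, ?_, ?_, ?_, ?_, ?_⟩,
    le_sup_left, le_sup_right, rfl, ?_, ?_⟩
  · rw [show (AddMonoidHom.mk' g hadd) ⟨x', hxD⟩ = g ⟨x', hxD⟩ from rfl,
      hgp x' p.mem_x' hxD]
    exact p.map_x'
  · rw [show (AddMonoidHom.mk' g hadd) ⟨y', hyD⟩ = g ⟨y', hyD⟩ from rfl,
      hgp y' p.mem_y' hyD]
    exact p.map_y'
  · intro n
    constructor
    · intro h
      rcases hmemx n h with h | h
      · exact hle1 ((p.mem_iff n).1 h)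
      · exact hle2 ((p'.mem_iff n).1 h)
    · intro h
      rcases hmemy n h with h | h
      · exact hle1 ((p.mem_iff n).2 h)
      · exact hle2 ((p'.mem_iff n).2 h)
  · intro n h
    rcases hmemx n h with hx | hx
    · have hy : y n ∈ p.dom := (p.mem_iff n).1 hx
      rcases p.max_one n hx with h1 | h1
      · left
        rw [show (AddMonoidHom.mk' g hadd) ⟨x n, h⟩ = g ⟨x n, h⟩ from rfl, hgp _ hx h]
        exact h1
      · right
        rw [show ∀ hh, (AddMonoidHom.mk' g hadd) ⟨y n, hh⟩ = g ⟨y n, hh⟩ from fun _ => rfl,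
          hgp _ hy]
        exact h1
    · have hy : y n ∈ p'.dom := (p'.mem_iff n).1 hx
      rcases p'.max_one n hx with h1 | h1
      · left
        rw [show (AddMonoidHom.mk' g hadd) ⟨x n, h⟩ = g ⟨x n, h⟩ from rfl, hgp' _ hx h]
        exact h1
      · right
        rw [show ∀ hh, (AddMonoidHom.mk' g hadd) ⟨y n, hh⟩ = g ⟨y n, hh⟩ from fun _ => rfl,
          hgp' _ hy]
        exact h1
  · intro v hv hvD
    refine hsup v (Submodule.span_mono ?_ hv) hvD
    rintro w ⟨n, hn, hw⟩
    exact ⟨n, ⟨fun hh => hn (hle1 hh), fun hh => hn (hle2 hh)⟩, hw⟩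
  · intro v hv
    exact hgp v hv _
  · intro v hv
    exact hgp' v hv _
end

section
/- With P as in the forcing for extending homomorphisms on a Boolean group E (conditions are homomorphisms from finite subgroups to ℤ/2 with side conditions), for every p ∈ P, every i ∈ {0,1}, every x ∈ E \ dom(p), and every n with {x_n, y_n} ⊄ dom(p), there is q ≤ p in P with {x, x_n, y_n} ⊆ dom(q) and q(x) = i. -/
private lemma zmod2cases (a : ZMod 2) : a = 0 ∨ a = 1 := by revert a; decide

private lemma exists_dual_of_li {K V : Type*} [Field K] [AddCommGroup V] [Module K V]
    {ι : Type*} {u : ι → V} (h : LinearIndependent K u) (w : ι → K) :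
    ∃ g : V →ₗ[K] K, ∀ j, g (u j) = w j := by
  classical
  obtain ⟨g, hg⟩ := LinearMap.exists_extend ((Module.Basis.span h).constr ℕ w)
  refine ⟨g, fun j => ?_⟩
  have h1 : u j ∈ Submodule.span K (Set.range u) := Submodule.subset_span ⟨j, rfl⟩
  have h2 : (⟨u j, h1⟩ : Submodule.span K (Set.range u)) = Module.Basis.span h j :=
    (Module.Basis.span_apply h j).symm
  have h3 := LinearMap.congr_fun hg ⟨u j, h1⟩
  rw [h2] at h3
  rw [Module.Basis.constr_basis] at h3
  simpa using h3



set_option maxHeartbeats 2000000 in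
theorem stmt15 {E : Type*} [AddCommGroup E] [Module (ZMod 2) E]
    (x' y' : E) (x y : ℕ → E)
    (hli : LinearIndependent (ZMod 2) (Sum.elim x y))
    (hinter : Submodule.span (ZMod 2) {x', y'} ⊓
      Submodule.span (ZMod 2) (Set.range x ∪ Set.range y) = ⊥)
    (p : Cond E x' y' x y) (i : ZMod 2) (v : E) (hv : v ∉ p.dom)
    (n : ℕ) (hn : ¬ ({x n, y n} : Set E) ⊆ (p.dom : Set E)) :
    ∃ q : Cond E x' y' x y, ∃ h : p.dom ≤ q.dom,
      (∀ w (hw : w ∈ p.dom), q.toFun ⟨w, h hw⟩ = p.toFun ⟨w, hw⟩) ∧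
      x n ∈ q.dom ∧ y n ∈ q.dom ∧
      ∃ hvq : v ∈ q.dom, q.toFun ⟨v, hvq⟩ = i := by
  classical
  have hxn : x n ∉ p.dom := by
    intro h
    exact hn (by
      rw [Set.insert_subset_iff, Set.singleton_subset_iff]
      exact ⟨h, (p.mem_iff n).1 h⟩)
  set D : Submodule (ZMod 2) E := AddSubgroup.toZModSubmodule 2 p.dom with hD
  -- base linear extension of p.toFun
  obtain ⟨f, hf⟩ := LinearMap.exists_extend
    (AddMonoidHom.toZModLinearMap 2 (M := ↥D) p.toFun)
  have hfd : ∀ d (hd : d ∈ p.dom), f d = p.toFun ⟨d, hd⟩ := by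
    intro d hd
    have h3 := LinearMap.congr_fun hf ⟨d, hd⟩
    exact h3
  -- independent family and quotient
  set J := {s : ℕ ⊕ ℕ // x (Sum.elim id id s) ∉ p.dom} with hJ
  have hbJ : LinearIndependent (ZMod 2) (fun s : J => Sum.elim x y s.val) :=
    hli.comp (fun s : J => s.val) Subtype.val_injective
  have hrangeS : ∀ s : J, Sum.elim x y s.val ∈
      {w | ∃ m, x m ∉ p.dom ∧ (w = x m ∨ w = y m)} := by
    rintro ⟨(m | m), hs⟩
    · exact ⟨m, hs, Or.inl rfl⟩
    · exact ⟨m, hs, Or.inr rfl⟩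
  have hdisj : Disjoint (Submodule.span (ZMod 2)
      (Set.range fun s : J => Sum.elim x y s.val)) D := by
    rw [Submodule.disjoint_def]
    intro z hz hzD
    exact p.span_inter z (Submodule.span_mono (Set.range_subset_iff.2 hrangeS) hz) hzD
  have hc : LinearIndependent (ZMod 2)
      (fun s : J => D.mkQ (Sum.elim x y s.val)) := by
    have h1 := hbJ.map (f := D.mkQ) (by rw [Submodule.ker_mkQ]; exact hdisj)
    exact h1
  set Vbar := Submodule.span (ZMod 2)
    (Set.range fun s : J => D.mkQ (Sum.elim x y s.val)) with hVbar
  set B : Module.Basis J (ZMod 2) Vbar := Module.Basis.span hc with hB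
  have hBc : ∀ s : J, (B s : E ⧸ D) = D.mkQ (Sum.elim x y s.val) := fun s =>
    congrArg Subtype.val (Module.Basis.span_apply hc s)
  obtain ⟨Cbar, hVC⟩ := Submodule.exists_isCompl Vbar
  set prL := Vbar.linearProjOfIsCompl Cbar hVC with hprL
  set prR := Cbar.linearProjOfIsCompl Vbar hVC.symm with hprR
  have hprRV : ∀ z : E ⧸ D, z ∈ Vbar → prR z = 0 := fun z hz =>
    Submodule.projectionOnto_apply_of_mem_right hVC.symm hz
  have hdecomp : ∀ z : E ⧸ D, ((prL z : E ⧸ D)) + ((prR z : E ⧸ D)) = z := fun z =>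
    Submodule.projection_add_projection_eq_self hVC z
  set e : J → (E →ₗ[ZMod 2] ZMod 2) := fun s => (B.coord s).comp (prL.comp D.mkQ) with he
  have he_dom : ∀ (s : J) (d : E), d ∈ p.dom → e s d = 0 := by
    intro s d hd
    have h0 : D.mkQ d = 0 := (Submodule.Quotient.mk_eq_zero D).2 hd
    simp [he, h0]
  have he_b : ∀ s t : J, e s (Sum.elim x y t.val) = if t = s then 1 else 0 := by
    intro s t
    have h1 : prL (D.mkQ (Sum.elim x y t.val)) = B t := by
      rw [← hBc t]
      exact Submodule.linearProjOfIsCompl_apply_left hVC (B t)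
    show B.coord s (prL (D.mkQ (Sum.elim x y t.val))) = _
    rw [h1, Module.Basis.coord_apply, Module.Basis.repr_self, Finsupp.single_apply]
  set σ : J →₀ ZMod 2 := B.repr (prL (D.mkQ v)) with hσdef
  have he_v : ∀ s : J, e s v = σ s := fun s => rfl
  set ubar := prR (D.mkQ v) with hubar
  set N : Finset ℕ := insert n (σ.support.image fun s => Sum.elim id id s.val) with hNdef
  have hnN : n ∈ N := by rw [hNdef]; exact Finset.mem_insert_self _ _
  have hNdom : ∀ m ∈ N, x m ∉ p.dom := by
    intro m hm
    rw [hNdef] at hm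
    rcases Finset.mem_insert.1 hm with rfl | hm
    · exact hxn
    · obtain ⟨s, hs, rfl⟩ := Finset.mem_image.1 hm
      exact s.property
  have hsuppN : ∀ s ∈ σ.support, Sum.elim id id s.val ∈ N := by
    intro s hs
    rw [hNdef]
    exact Finset.mem_insert_of_mem (Finset.mem_image_of_mem _ hs)
  -- the total delta functionals
  obtain ⟨e', he'dom, he'b, he'v⟩ :
      ∃ e' : (ℕ ⊕ ℕ) → (E →ₗ[ZMod 2] ZMod 2),
        (∀ s d, d ∈ p.dom → e' s d = 0) ∧
        (∀ s t : ℕ ⊕ ℕ, x (Sum.elim id id t) ∉ p.dom →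
          e' s (Sum.elim x y t) = if s = t then 1 else 0) ∧
        (∀ (s : ℕ ⊕ ℕ) (h : x (Sum.elim id id s) ∉ p.dom), e' s v = σ ⟨s, h⟩) := by
    refine ⟨fun s => if h : x (Sum.elim id id s) ∉ p.dom then e ⟨s, h⟩ else 0, ?_, ?_, ?_⟩
    · intro s d hd
      dsimp only
      split
      · exact he_dom _ _ hd
      · rfl
    · intro s t ht
      dsimp only
      by_cases hs : x (Sum.elim id id s) ∉ p.dom
      · rw [dif_pos hs, he_b ⟨s, hs⟩ ⟨t, ht⟩]
        by_cases hst : s = t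
        · subst hst; rw [if_pos rfl, if_pos rfl]
        · rw [if_neg (fun hcc => hst (congrArg Subtype.val hcc).symm), if_neg hst]
      · rw [dif_neg hs, if_neg, LinearMap.zero_apply]
        rintro rfl; exact hs ht
    · intro s h
      dsimp only
      rw [dif_pos h]
      exact he_v ⟨s, h⟩
  -- first approximation F₁
  obtain ⟨F₁, hF₁dom, hF₁x, hF₁y⟩ :
      ∃ F₁ : E →ₗ[ZMod 2] ZMod 2,
        (∀ d, d ∈ p.dom → F₁ d = f d) ∧
        (∀ m ∈ N, F₁ (x m) = 1) ∧
        (∀ m ∈ N, F₁ (y m) = 0) := by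
    refine ⟨f + ∑ m ∈ N, ((1 + f (x m)) • e' (Sum.inl m) + f (y m) • e' (Sum.inr m)),
      ?_, ?_, ?_⟩
    · intro d hd
      rw [LinearMap.add_apply, LinearMap.sum_apply]
      have h1 : ∀ m ∈ N, ((1 + f (x m)) • e' (Sum.inl m) + f (y m) • e' (Sum.inr m)) d
          = 0 := by
        intro m _
        rw [LinearMap.add_apply, LinearMap.smul_apply, LinearMap.smul_apply,
          he'dom _ _ hd, he'dom _ _ hd, smul_zero, smul_zero, add_zero]
      rw [Finset.sum_congr rfl h1, Finset.sum_const_zero, add_zero]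
    · intro m' hm'
      rw [LinearMap.add_apply, LinearMap.sum_apply]
      have hxt : x (Sum.elim id id (Sum.inl m' : ℕ ⊕ ℕ)) ∉ p.dom := hNdom m' hm'
      have h1 : ∀ m ∈ N, ((1 + f (x m)) • e' (Sum.inl m) + f (y m) • e' (Sum.inr m)) (x m')
          = if m = m' then 1 + f (x m') else 0 := by
        intro m _
        have h2 : e' (Sum.inl m) (x m') = if (Sum.inl m : ℕ ⊕ ℕ) = Sum.inl m' then 1 else 0 :=
          he'b _ _ hxt
        have h3 : e' (Sum.inr m) (x m') = if (Sum.inr m : ℕ ⊕ ℕ) = Sum.inl m' then 1 else 0 :=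
          he'b _ _ hxt
        rw [LinearMap.add_apply, LinearMap.smul_apply, LinearMap.smul_apply, h2, h3]
        by_cases h : m = m'
        · subst h; simp
        · rw [if_neg (by simpa using h), if_neg (by simp), if_neg h]; simp
      rw [Finset.sum_congr rfl h1, Finset.sum_ite_eq' N m' _, if_pos hm']
      have h4 : ∀ a : ZMod 2, a + (1 + a) = 1 := by decide
      exact h4 _
    · intro m' hm'
      rw [LinearMap.add_apply, LinearMap.sum_apply]
      have hxt : x (Sum.elim id id (Sum.inr m' : ℕ ⊕ ℕ)) ∉ p.dom := hNdom m' hm'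
      have h1 : ∀ m ∈ N, ((1 + f (x m)) • e' (Sum.inl m) + f (y m) • e' (Sum.inr m)) (y m')
          = if m = m' then f (y m') else 0 := by
        intro m _
        have h2 : e' (Sum.inl m) (y m') = if (Sum.inl m : ℕ ⊕ ℕ) = Sum.inr m' then 1 else 0 :=
          he'b _ _ hxt
        have h3 : e' (Sum.inr m) (y m') = if (Sum.inr m : ℕ ⊕ ℕ) = Sum.inr m' then 1 else 0 :=
          he'b _ _ hxt
        rw [LinearMap.add_apply, LinearMap.smul_apply, LinearMap.smul_apply, h2, h3]
        by_cases h : m = m'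
        · subst h; simp
        · rw [if_neg (by simp), if_neg (by simpa using h), if_neg h]; simp
      rw [Finset.sum_congr rfl h1, Finset.sum_ite_eq' N m' _, if_pos hm']
      have h4 : ∀ a : ZMod 2, a + a = 0 := by decide
      exact h4 _
  have hadd : ∀ a b : ZMod 2, a + (b + a) * 1 = b := by decide
  obtain ⟨F, hFdom, hFv, hFpair⟩ :
      ∃ F : E →ₗ[ZMod 2] ZMod 2,
        (∀ d, d ∈ p.dom → F d = f d) ∧ F v = i ∧
        (∀ m ∈ N, F (x m) = 1 ∨ F (y m) = 1) := by
    by_cases hu : ubar = 0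
    · -- σ ≠ 0 case
      have hσne : σ ≠ 0 := by
        intro h0
        apply hv
        have h1 : prL (D.mkQ v) = 0 := by
          have h2 : B.repr (prL (D.mkQ v)) = 0 := by rw [← hσdef]; exact h0
          exact (LinearEquiv.map_eq_zero_iff B.repr).1 h2
        have h2 := hdecomp (D.mkQ v)
        rw [← hubar, hu, h1] at h2
        simp only [Submodule.coe_zero, add_zero, zero_add] at h2
        exact (Submodule.Quotient.mk_eq_zero D).1 h2.symm
      by_cases hR : ∃ s ∈ σ.support, ∃ m : ℕ, s.val = Sum.inr m
      · obtain ⟨s, hs, m, hsm⟩ := hR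
        have hmdom : x m ∉ p.dom := by
          have h1 := s.property
          rwa [hsm] at h1
        have hval : e' (Sum.inr m) v = 1 := by
          rw [he'v (Sum.inr m) hmdom,
            show (⟨Sum.inr m, hmdom⟩ : J) = s from Subtype.ext hsm.symm]
          rcases zmod2cases (σ s) with h | h
          · exact absurd h (Finsupp.mem_support_iff.1 hs)
          · exact h
        refine ⟨F₁ + (i + F₁ v) • e' (Sum.inr m), ?_, ?_, ?_⟩
        · intro d hd
          rw [LinearMap.add_apply, LinearMap.smul_apply, he'dom _ _ hd, smul_zero, add_zero]
          exact hF₁dom d hd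
        · rw [LinearMap.add_apply, LinearMap.smul_apply, hval, smul_eq_mul]
          exact hadd _ _
        · intro m' hm'
          left
          have h1 : e' (Sum.inr m) (x m') = 0 := by
            rw [show x m' = Sum.elim x y (Sum.inl m') from rfl,
              he'b _ (Sum.inl m') (hNdom m' hm'), if_neg (by simp)]
          rw [LinearMap.add_apply, LinearMap.smul_apply, h1, smul_zero, add_zero]
          exact hF₁x m' hm'
      · -- all of the support consists of inl's
        obtain ⟨s₀, hs₀⟩ := Finsupp.support_nonempty_iff.2 hσne
        obtain ⟨m₀, hm₀⟩ : ∃ m₀, s₀.val = Sum.inl m₀ := by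
          rcases hss : s₀.val with m | m
          · exact ⟨m, rfl⟩
          · exact absurd ⟨s₀, hs₀, m, hss⟩ hR
        have hm₀dom : x m₀ ∉ p.dom := by
          have h1 := s₀.property
          rwa [hm₀] at h1
        have hvalL : e' (Sum.inl m₀) v = 1 := by
          rw [he'v (Sum.inl m₀) hm₀dom,
            show (⟨Sum.inl m₀, hm₀dom⟩ : J) = s₀ from Subtype.ext hm₀.symm]
          rcases zmod2cases (σ s₀) with h | h
          · exact absurd h (Finsupp.mem_support_iff.1 hs₀)
          · exact h
        have hvalR : e' (Sum.inr m₀) v = 0 := by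
          rw [he'v (Sum.inr m₀) hm₀dom]
          by_contra hne
          exact hR ⟨⟨Sum.inr m₀, hm₀dom⟩, Finsupp.mem_support_iff.2 hne, m₀, rfl⟩
        refine ⟨F₁ + (i + F₁ v) • (e' (Sum.inl m₀) + e' (Sum.inr m₀)), ?_, ?_, ?_⟩
        · intro d hd
          rw [LinearMap.add_apply, LinearMap.smul_apply, LinearMap.add_apply,
            he'dom _ _ hd, he'dom _ _ hd, add_zero, smul_zero, add_zero]
          exact hF₁dom d hd
        · rw [LinearMap.add_apply, LinearMap.smul_apply, LinearMap.add_apply,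
            hvalL, hvalR, add_zero, smul_eq_mul]
          exact hadd _ _
        · intro m' hm'
          by_cases hmm : m₀ = m'
          · subst hmm
            have hx1 : e' (Sum.inl m₀) (x m₀) = 1 := by
              rw [show x m₀ = Sum.elim x y (Sum.inl m₀) from rfl,
                he'b _ (Sum.inl m₀) (hNdom _ hm'), if_pos rfl]
            have hx2 : e' (Sum.inr m₀) (x m₀) = 0 := by
              rw [show x m₀ = Sum.elim x y (Sum.inl m₀) from rfl,
                he'b _ (Sum.inl m₀) (hNdom _ hm'), if_neg (by simp)]
            have hy1 : e' (Sum.inl m₀) (y m₀) = 0 := by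
              rw [show y m₀ = Sum.elim x y (Sum.inr m₀) from rfl,
                he'b _ (Sum.inr m₀) (hNdom _ hm'), if_neg (by simp)]
            have hy2 : e' (Sum.inr m₀) (y m₀) = 1 := by
              rw [show y m₀ = Sum.elim x y (Sum.inr m₀) from rfl,
                he'b _ (Sum.inr m₀) (hNdom _ hm'), if_pos rfl]
            rcases zmod2cases (i + F₁ v) with h | h
            · left
              rw [LinearMap.add_apply, LinearMap.smul_apply, LinearMap.add_apply,
                hx1, hx2, add_zero, h, zero_smul, add_zero]
              exact hF₁x _ hm'
            · right
              rw [LinearMap.add_apply, LinearMap.smul_apply, LinearMap.add_apply,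
                hy1, hy2, zero_add, h, one_smul, hF₁y _ hm', zero_add]
          · left
            have hx1 : e' (Sum.inl m₀) (x m') = 0 := by
              rw [show x m' = Sum.elim x y (Sum.inl m') from rfl,
                he'b _ (Sum.inl m') (hNdom _ hm'), if_neg (by simpa using hmm)]
            have hx2 : e' (Sum.inr m₀) (x m') = 0 := by
              rw [show x m' = Sum.elim x y (Sum.inl m') from rfl,
                he'b _ (Sum.inl m') (hNdom _ hm'), if_neg (by simp)]
            rw [LinearMap.add_apply, LinearMap.smul_apply, LinearMap.add_apply,
              hx1, hx2, add_zero, smul_zero, add_zero]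
            exact hF₁x _ hm'
    · -- ubar ≠ 0 case
      have hui : LinearIndependent (ZMod 2) (fun _ : Unit => ubar) :=
        linearIndependent_unique_iff.2 hu
      obtain ⟨ξ, hξ⟩ := exists_dual_of_li hui (fun _ => 1)
      have hξu : ξ ubar = 1 := hξ ()
      refine ⟨F₁ + (i + F₁ v) • (ξ.comp (prR.comp D.mkQ)), ?_, ?_, ?_⟩
      · intro d hd
        have h0 : D.mkQ d = 0 := (Submodule.Quotient.mk_eq_zero D).2 hd
        rw [LinearMap.add_apply, LinearMap.smul_apply, LinearMap.comp_apply,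
          LinearMap.comp_apply, h0, map_zero, map_zero, smul_zero, add_zero]
        exact hF₁dom d hd
      · rw [LinearMap.add_apply, LinearMap.smul_apply, LinearMap.comp_apply,
          LinearMap.comp_apply, ← hubar, hξu, smul_eq_mul]
        exact hadd _ _
      · intro m' hm'
        left
        have h1 : prR (D.mkQ (x m')) = 0 := by
          apply hprRV
          rw [hVbar]
          exact Submodule.subset_span ⟨⟨Sum.inl m', hNdom m' hm'⟩, rfl⟩
        rw [LinearMap.add_apply, LinearMap.smul_apply, LinearMap.comp_apply,
          LinearMap.comp_apply, h1, map_zero, smul_zero, add_zero]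
        exact hF₁x m' hm'
  set Tset : Set E := ↑(N.image x ∪ N.image y) with hTdef
  have hTx : ∀ m ∈ N, x m ∈ Tset := fun m hm => by
    rw [hTdef]
    exact Finset.mem_coe.2 (Finset.mem_union_left _ (Finset.mem_image_of_mem x hm))
  have hTy : ∀ m ∈ N, y m ∈ Tset := fun m hm => by
    rw [hTdef]
    exact Finset.mem_coe.2 (Finset.mem_union_right _ (Finset.mem_image_of_mem y hm))
  set Dq : Submodule (ZMod 2) E := D ⊔ Submodule.span (ZMod 2) (insert v Tset) with hDqdef
  have hDle : ∀ z ∈ p.dom, z ∈ Dq := fun z hz => by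
    rw [hDqdef]; exact Submodule.mem_sup_left hz
  have hvDq : v ∈ Dq := by
    rw [hDqdef]
    exact Submodule.mem_sup_right (Submodule.subset_span (Set.mem_insert v _))
  have hTDq : ∀ w ∈ Tset, w ∈ Dq := fun w hw => by
    rw [hDqdef]
    exact Submodule.mem_sup_right (Submodule.subset_span (Set.mem_insert_of_mem _ hw))
  have hsub : ∀ A : Set J, Submodule.span (ZMod 2)
      ((fun s : J => D.mkQ (Sum.elim x y s.val)) '' A) ≤ Vbar := fun A => by
    rw [hVbar]
    exact Submodule.span_mono (Set.image_subset_range _ A)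
  -- the key claim
  have hclaim : ∀ z ∈ Submodule.span (ZMod 2)
      {w | ∃ m, (x m ∉ p.dom ∧ m ∉ N) ∧ (w = x m ∨ w = y m)}, z ∈ Dq → z = 0 := by
    intro z hzS hzD
    have hz1 : D.mkQ z ∈ Submodule.span (ZMod 2)
        ((fun s : J => D.mkQ (Sum.elim x y s.val)) ''
          {s : J | Sum.elim id id s.val ∉ N}) := by
      have h1 : D.mkQ z ∈ Submodule.map D.mkQ (Submodule.span (ZMod 2)
          {w | ∃ m, (x m ∉ p.dom ∧ m ∉ N) ∧ (w = x m ∨ w = y m)}) :=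
        Submodule.mem_map_of_mem hzS
      rw [Submodule.map_span] at h1
      refine Submodule.span_mono ?_ h1
      rintro u ⟨w, ⟨m, ⟨hm1, hm2⟩, (rfl | rfl)⟩, rfl⟩
      · exact ⟨⟨Sum.inl m, hm1⟩, hm2, rfl⟩
      · exact ⟨⟨Sum.inr m, hm1⟩, hm2, rfl⟩
    rw [hDqdef] at hzD
    obtain ⟨d, hd, t, ht, hsum⟩ := Submodule.mem_sup.1 hzD
    obtain ⟨a, w, hw, rfl⟩ := Submodule.mem_span_insert.1 ht
    have hwbar : D.mkQ w ∈ Submodule.span (ZMod 2)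
        ((fun s : J => D.mkQ (Sum.elim x y s.val)) ''
          {s : J | Sum.elim id id s.val ∈ N}) := by
      have h1 : D.mkQ w ∈ Submodule.map D.mkQ (Submodule.span (ZMod 2) Tset) :=
        Submodule.mem_map_of_mem hw
      rw [Submodule.map_span] at h1
      refine Submodule.span_mono ?_ h1
      rintro u ⟨w', hw', rfl⟩
      rw [hTdef] at hw'
      rcases Finset.mem_union.1 (Finset.mem_coe.1 hw') with h | h
      · obtain ⟨m, hm, rfl⟩ := Finset.mem_image.1 h
        exact ⟨⟨Sum.inl m, hNdom m hm⟩, hm, rfl⟩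
      · obtain ⟨m, hm, rfl⟩ := Finset.mem_image.1 h
        exact ⟨⟨Sum.inr m, hNdom m hm⟩, hm, rfl⟩
    have hd0 : D.mkQ d = 0 := (Submodule.Quotient.mk_eq_zero D).2 hd
    have hmkz : D.mkQ z = a • D.mkQ v + D.mkQ w := by
      rw [← hsum, map_add, map_add, map_smul, hd0, zero_add]
    have haubar : a • ubar = 0 := by
      have h1 : prR (D.mkQ z) = 0 := hprRV _ (hsub _ hz1)
      rw [hmkz, map_add, map_smul, hprRV _ (hsub _ hwbar), add_zero, ← hubar] at h1
      exact h1
    have hzV : D.mkQ z ∈ Submodule.span (ZMod 2)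
        ((fun s : J => D.mkQ (Sum.elim x y s.val)) ''
          {s : J | Sum.elim id id s.val ∈ N}) := by
      rw [hmkz]
      refine Submodule.add_mem _ ?_ hwbar
      by_cases hu : ubar = 0
      · refine Submodule.smul_mem _ a ?_
        have hvV : D.mkQ v = ((prL (D.mkQ v) : Vbar) : E ⧸ D) := by
          have h2 := hdecomp (D.mkQ v)
          rw [← hubar, hu] at h2
          simp only [Submodule.coe_zero, add_zero] at h2
          exact h2.symm
        rw [hvV]
        have h3 : prL (D.mkQ v) ∈ Submodule.span (ZMod 2)
            (B '' {s : J | Sum.elim id id s.val ∈ N}) :=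
          B.mem_span_image.2 (fun s hs => hsuppN s hs)
        have h4 := Submodule.mem_map_of_mem (f := Vbar.subtype) h3
        rw [Submodule.map_span] at h4
        refine Submodule.span_mono ?_ h4
        rintro u ⟨u', ⟨s, hs, rfl⟩, rfl⟩
        exact ⟨s, hs, (hBc s).symm⟩
      · have ha : a = 0 := by
          rcases zmod2cases a with h | h
          · exact h
          · rw [h, one_smul] at haubar
            exact absurd haubar hu
        rw [ha, zero_smul]
        exact Submodule.zero_mem _
    have hdisJ : Disjoint
        (Submodule.span (ZMod 2) ((fun s : J => D.mkQ (Sum.elim x y s.val)) ''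
          {s : J | Sum.elim id id s.val ∉ N}))
        (Submodule.span (ZMod 2) ((fun s : J => D.mkQ (Sum.elim x y s.val)) ''
          {s : J | Sum.elim id id s.val ∈ N})) :=
      hc.disjoint_span_image (Set.disjoint_left.2 fun s hs hs' => hs hs')
    have hz0 : D.mkQ z = 0 := Submodule.disjoint_def.1 hdisJ _ hz1 hzV
    have hzD' : z ∈ p.dom := (Submodule.Quotient.mk_eq_zero D).1 hz0
    refine p.span_inter _ (Submodule.span_mono ?_ hzS) hzD'
    rintro u ⟨m, ⟨hm1, _⟩, hm3⟩
    exact ⟨m, hm1, hm3⟩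
  -- characterization of new pair memberships
  have hcharx : ∀ m, x m ∈ Dq → x m ∈ p.dom ∨ m ∈ N := by
    intro m hm
    by_contra hcon
    push_neg at hcon
    have h0 := hclaim (x m)
      (Submodule.subset_span ⟨m, ⟨hcon.1, hcon.2⟩, Or.inl rfl⟩) hm
    exact hcon.1 (h0 ▸ p.dom.zero_mem)
  have hchary : ∀ m, y m ∈ Dq → x m ∈ p.dom ∨ m ∈ N := by
    intro m hm
    by_contra hcon
    push_neg at hcon
    have h0 := hclaim (y m)
      (Submodule.subset_span ⟨m, ⟨hcon.1, hcon.2⟩, Or.inr rfl⟩) hm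
    have h1 : y m ∈ p.dom := h0 ▸ p.dom.zero_mem
    exact hcon.1 ((p.mem_iff m).2 h1)
  -- finiteness
  have hDqfin : (Dq : Set E).Finite := by
    have h1 : (insert v Tset).Finite := by
      rw [hTdef]
      exact ((N.image x ∪ N.image y).finite_toSet).insert v
    have h2 : Module.Finite (ZMod 2) (Submodule.span (ZMod 2) (insert v Tset)) :=
      Module.Finite.span_of_finite _ h1
    have h3 : Finite (Submodule.span (ZMod 2) (insert v Tset)) :=
      Module.finite_of_finite (ZMod 2)
    have h4 : ((Submodule.span (ZMod 2) (insert v Tset) :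
        Submodule (ZMod 2) E) : Set E).Finite := Set.finite_coe_iff.1 h3
    have h5 : (Dq : Set E) ⊆ Set.image2 (· + ·) (p.dom : Set E)
        ((Submodule.span (ZMod 2) (insert v Tset) : Submodule (ZMod 2) E) : Set E) := by
      intro z hz
      rw [hDqdef] at hz
      obtain ⟨a, ha, b, hb, hab⟩ := Submodule.mem_sup.1 hz
      exact ⟨a, ha, b, hb, hab⟩
    exact (Set.Finite.image2 _ p.finite h4).subset h5
  -- assemble the new condition
  refine ⟨{ dom := Dq.toAddSubgroup
            finite := hDqfin
            toFun := F.toAddMonoidHom.comp Dq.toAddSubgroup.subtype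
            mem_x' := hDle x' p.mem_x'
            mem_y' := hDle y' p.mem_y'
            map_x' := by
              show F x' = 0
              rw [hFdom x' p.mem_x', hfd x' p.mem_x']
              exact p.map_x'
            map_y' := by
              show F y' = 0
              rw [hFdom y' p.mem_y', hfd y' p.mem_y']
              exact p.map_y'
            mem_iff := by
              intro m
              constructor
              · intro hxm
                rcases hcharx m hxm with h | h
                · exact hDle _ ((p.mem_iff m).1 h)
                · exact hTDq _ (hTy m h)
              · intro hym
                rcases hchary m hym with h | h
                · exact hDle _ h
                · exact hTDq _ (hTx m h)
            max_one := by
              intro m hm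
              rcases hcharx m hm with h | h
              · have h' := (p.mem_iff m).1 h
                rcases p.max_one m h with hp | hp
                · left
                  show F (x m) = 1
                  rw [hFdom _ h, hfd _ h]
                  exact hp
                · right
                  show F (y m) = 1
                  rw [hFdom _ h', hfd _ h']
                  exact hp
              · rcases hFpair m h with h1 | h1
                · left; exact h1
                · right; exact h1
            span_inter := by
              intro z hz hzD
              refine hclaim z (Submodule.span_mono ?_ hz) hzD
              rintro w ⟨m, hm1, hm2⟩
              refine ⟨m, ⟨?_, ?_⟩, hm2⟩
              · intro hcc
                exact hm1 (hDle _ hcc)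
              · intro hcc
                exact hm1 (hTDq _ (hTx m hcc)) }, ?_, ?_, ?_, ?_, ?_, ?_⟩
  · exact fun z hz => hDle z hz
  · intro w hw
    show F w = p.toFun ⟨w, hw⟩
    rw [hFdom _ hw, hfd _ hw]
  · exact hTDq _ (hTx n hnN)
  · exact hTDq _ (hTy n hnN)
  · exact hvDq
  · exact hFv
end
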